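/- Let n ≥ 1, let p_1, ..., p_n be distinct real numbers, λ_1, ..., λ_n ∈ ℝ, and let g : ℝ → ℝ be differentiable with g(p_i) ≠ 0 for all i. Define v_j(z) = ∏_{k≠j} (z − p_k). Then det( (v_j g)′(p_i) − λ_i v_j(p_i) g(p_i) )_{1≤i,j≤n} = ( ∏_{k=1}^n g(p_k) v_k(p_k) ) · det( (1 − δ_{ij})/(p_i − p_j) + δ_{ij} ( Σ_{α≠i} 1/(p_i − p_α) + g′(p_i)/g(p_i) − λ_i ) )_{1≤i,j≤n}, where (v_j g)′ denotes the derivative of the product z ↦ v_j(z)g(z). (With g(z) = e^{Σ t_k z^k}, this identity exhibits the Calogero–Moser tau-function τ_n(t) as c_n e^{tr Σ t_i Ỹ^i} det(−X̃ + Σ_k k t_k Ỹ^{k−1}).) -/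

import Mathlib

lemma prod_hasDerivAt {n : ℕ} (p : Fin n → ℝ) (s : Finset (Fin n)) (x : ℝ) :
    HasDerivAt (fun z => ∏ k ∈ s, (z - p k))
      (∑ a ∈ s, ∏ k ∈ s.erase a, (x - p k)) x := by
  have h := HasDerivAt.fun_finsetProd (u := s) (f := fun k z => z - p k)
    (f' := fun _ => (1 : ℝ)) (x := x)
    (fun i _ => (hasDerivAt_id x).sub_const (p i))
  simpa using h

/-- Calogero–Moser tau-function determinant identity: for distinct
reals `p 1, ..., p n`, reals `λ i`, and a differentiable `g` with `g (p i) ≠ 0`,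
setting `v j z = ∏_{k ≠ j} (z - p k)`, one has
`det ((v j * g)' (p i) - λ i * v j (p i) * g (p i))
  = (∏ₖ g (p k) * v k (p k)) *
    det ((1 - δᵢⱼ)/(p i - p j) + δᵢⱼ (∑_{α ≠ i} 1/(p i - p α) + g'(p i)/g(p i) - λ i))`. -/
theorem calogero_moser_determinant_identity
    (n : ℕ) (hn : 1 ≤ n) (p : Fin n → ℝ) (hp : Function.Injective p)
    (lam : Fin n → ℝ) (g : ℝ → ℝ) (hg : Differentiable ℝ g)
    (hgp : ∀ i : Fin n, g (p i) ≠ 0) :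
    Matrix.det (Matrix.of fun i j : Fin n =>
        deriv (fun z : ℝ => (∏ k ∈ Finset.univ.erase j, (z - p k)) * g z) (p i)
          - lam i * (∏ k ∈ Finset.univ.erase j, (p i - p k)) * g (p i))
      = (∏ k : Fin n, g (p k) * ∏ j ∈ Finset.univ.erase k, (p k - p j)) *
          Matrix.det (Matrix.of fun i j : Fin n =>
            if i = j then
              (∑ a ∈ Finset.univ.erase i, 1 / (p i - p a))
                + deriv g (p i) / g (p i) - lam i
            else 1 / (p i - p j)) := by
  have hpd : ∀ {i j : Fin n}, i ≠ j → p i - p j ≠ 0 := by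
    intro i j hij
    exact sub_ne_zero.mpr (fun h => hij (hp h))
  set B : Matrix (Fin n) (Fin n) ℝ := Matrix.of fun i j : Fin n =>
            if i = j then
              (∑ a ∈ Finset.univ.erase i, 1 / (p i - p a))
                + deriv g (p i) / g (p i) - lam i
            else 1 / (p i - p j) with hB
  have key : (Matrix.of fun i j : Fin n =>
        deriv (fun z : ℝ => (∏ k ∈ Finset.univ.erase j, (z - p k)) * g z) (p i)
          - lam i * (∏ k ∈ Finset.univ.erase j, (p i - p k)) * g (p i))
      = Matrix.diagonal (fun k => g (p k) * ∏ j ∈ Finset.univ.erase k, (p k - p j)) * B := by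
    ext i j
    rw [Matrix.diagonal_mul]
    have hder : deriv (fun z : ℝ => (∏ k ∈ Finset.univ.erase j, (z - p k)) * g z) (p i)
        = (∑ a ∈ Finset.univ.erase j, ∏ k ∈ (Finset.univ.erase j).erase a, (p i - p k))
            * g (p i)
          + (∏ k ∈ Finset.univ.erase j, (p i - p k)) * deriv g (p i) := by
      exact ((prod_hasDerivAt p _ (p i)).mul ((hg (p i)).hasDerivAt)).deriv
    rw [Matrix.of_apply, hder]
    by_cases hij : i = j
    · subst hij
      simp only [hB, Matrix.of_apply, if_pos rfl, ↓reduceIte]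
      have hsum : (∑ a ∈ Finset.univ.erase i, ∏ k ∈ (Finset.univ.erase i).erase a, (p i - p k))
          = (∏ j ∈ Finset.univ.erase i, (p i - p j)) * ∑ a ∈ Finset.univ.erase i, 1 / (p i - p a) := by
        rw [Finset.mul_sum]
        refine Finset.sum_congr rfl (fun a ha => ?_)
        have hai : a ≠ i := (Finset.mem_erase.mp ha).1
        rw [← Finset.prod_erase_mul _ _ ha]
        field_simp [hpd (Ne.symm hai)]
      rw [hsum]
      field_simp [hgp i]
    · -- off-diagonal
      simp only [hB, Matrix.of_apply, if_neg hij]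
      have hji : j ∈ Finset.univ.erase i := Finset.mem_erase.mpr ⟨Ne.symm hij, Finset.mem_univ j⟩
      have hij' : i ∈ Finset.univ.erase j := Finset.mem_erase.mpr ⟨hij, Finset.mem_univ i⟩
      have hz : (∏ k ∈ Finset.univ.erase j, (p i - p k)) = 0 :=
        Finset.prod_eq_zero hij' (by simp)
      have hsum : (∑ a ∈ Finset.univ.erase j, ∏ k ∈ (Finset.univ.erase j).erase a, (p i - p k))
          = ∏ k ∈ (Finset.univ.erase j).erase i, (p i - p k) := by
        refine Finset.sum_eq_single i (fun a ha hai => ?_) (fun h => absurd hij' h)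
        exact Finset.prod_eq_zero (Finset.mem_erase.mpr ⟨Ne.symm hai, hij'⟩) (by simp)
      rw [hsum, hz]
      have hswap : (Finset.univ.erase j).erase i = (Finset.univ.erase i).erase j :=
        Finset.erase_right_comm
      have hprod : (∏ k ∈ Finset.univ.erase i, (p i - p k))
          = (∏ k ∈ (Finset.univ.erase i).erase j, (p i - p k)) * (p i - p j) :=
        (Finset.prod_erase_mul _ _ hji).symm
      rw [hswap, hprod]
      field_simp [hpd hij]
      ring
  rw [key, Matrix.det_mul, Matrix.det_diagonal]
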